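/- Let p, q be real numbers with 0 < p ≤ q and p + q < 1, and let a, b be natural numbers with a ≤ b and b ≥ 1. Then p^a·(1−p)^b ≥ q^b·(1−q)^a if and only if S(p,q) ≥ a/b, and moreover p^a·(1−p)^b = q^b·(1−q)^a if and only if S(p,q) = a/b. -/
import Mathlib


open Real Set

/-- The parameter space `T = {(p,q) : 0 ≤ p ≤ q, p + q < 1} \ {(0,0)}`. -/
def bacT : Set (ℝ × ℝ) := {pq | 0 ≤ pq.1 ∧ pq.1 ≤ pq.2 ∧ pq.1 + pq.2 < 1 ∧ pq ≠ (0, 0)}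

/-- The BAC-function `S`. -/
noncomputable def bacS (p q : ℝ) : ℝ :=
  if p = 0 then 0 else (Real.log (1 - p) - Real.log q) / (Real.log (1 - q) - Real.log p)

/-- Transition probability of the n-fold binary asymmetric channel `BAC^n(p,q)`:
`bacPr p q x y = Pr(x|y)`. -/
noncomputable def bacPr (p q : ℝ) {n : ℕ} (x y : Fin n → Bool) : ℝ :=
  ∏ i, if x i then (if y i then 1 - q else p) else (if y i then q else 1 - p)

/-- The channels `BAC(p,q)` and `BAC(p',q')` are `n`-equivalent. -/
def nEquiv (n : ℕ) (p q p' q' : ℝ) : Prop :=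
  ∀ x y z : Fin n → Bool,
    (bacPr p q x y ≤ bacPr p q x z ↔ bacPr p' q' x y ≤ bacPr p' q' x z)

/-- A point `(p,q) ∈ T` is `n`-stable if all nearby points of `T` are `n`-equivalent to it. -/
def nStable (n : ℕ) (pq : ℝ × ℝ) : Prop :=
  ∃ ε > 0, ∀ pq' ∈ bacT, ‖pq' - pq‖ < ε → nEquiv n pq.1 pq.2 pq'.1 pq'.2

theorem stmt0 (p q : ℝ) (hp : 0 < p) (hpq : p ≤ q) (hsum : p + q < 1)
    (a b : ℕ) (hab : a ≤ b) (hb : 1 ≤ b) :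
    (p ^ a * (1 - p) ^ b ≥ q ^ b * (1 - q) ^ a ↔ bacS p q ≥ (a : ℝ) / (b : ℝ)) ∧
    (p ^ a * (1 - p) ^ b = q ^ b * (1 - q) ^ a ↔ bacS p q = (a : ℝ) / (b : ℝ)) := by
  have hq : 0 < q := lt_of_lt_of_le hp hpq
  have h1p : 0 < 1 - p := by linarith
  have h1q : 0 < 1 - q := by linarith
  have hD : Real.log p < Real.log (1 - q) := Real.log_lt_log hp (by linarith)
  have hN : Real.log q < Real.log (1 - p) := Real.log_lt_log hq (by linarith)
  have hb' : (0:ℝ) < b := by exact_mod_cast hb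
  have hPL : (0:ℝ) < p ^ a * (1 - p) ^ b := by positivity
  have hQL : (0:ℝ) < q ^ b * (1 - q) ^ a := by positivity
  have hlogP : Real.log (p ^ a * (1 - p) ^ b) = a * Real.log p + b * Real.log (1 - p) := by
    rw [Real.log_mul (by positivity) (by positivity), Real.log_pow, Real.log_pow]
  have hlogQ : Real.log (q ^ b * (1 - q) ^ a) = b * Real.log q + a * Real.log (1 - q) := by
    rw [Real.log_mul (by positivity) (by positivity), Real.log_pow, Real.log_pow]
  have hS : bacS p q = (Real.log (1 - p) - Real.log q) / (Real.log (1 - q) - Real.log p) := by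
    rw [bacS, if_neg hp.ne']
  constructor
  · rw [ge_iff_le, ← Real.log_le_log_iff hQL hPL, hlogP, hlogQ, hS, ge_iff_le,
      div_le_div_iff₀ hb' (by linarith)]
    constructor <;> intro h <;> nlinarith
  · rw [hS]
    constructor
    · intro h
      have hlog : Real.log (q ^ b * (1 - q) ^ a) = Real.log (p ^ a * (1 - p) ^ b) :=
        by rw [h]
      rw [hlogP, hlogQ] at hlog
      rw [div_eq_div_iff (sub_ne_zero.mpr hD.ne') hb'.ne']
      nlinarith
    · intro h
      rw [div_eq_div_iff (sub_ne_zero.mpr hD.ne') hb'.ne'] at h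
      have hlog : Real.log (p ^ a * (1 - p) ^ b) = Real.log (q ^ b * (1 - q) ^ a) := by
        rw [hlogP, hlogQ]; nlinarith
      calc p ^ a * (1 - p) ^ b = Real.exp (Real.log (p ^ a * (1 - p) ^ b)) :=
            (Real.exp_log hPL).symm
        _ = Real.exp (Real.log (q ^ b * (1 - q) ^ a)) := by rw [hlog]
        _ = q ^ b * (1 - q) ^ a := Real.exp_log hQL
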